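/- arXiv:1305.1899 — 4 statements merged into one kernel-verified Lean document; each statement's English description precedes it below -/
import Mathlib

section
/- Suppose n ratings r₁, …, r_n are i.i.d. with values in {1, …, m} and P[r_j = k] = α_k, where ℓ = argmax_k α_k is unique and α̃ denotes the second-largest value among α₁, …, α_m. Let n_k = |{j : r_j = k}| and let the majority label be ℓ̂ = argmax_k n_k. If n ≥ (12·α_ℓ / (α_ℓ − α̃)²) · ln(m/δ), then P[ℓ̂ = ℓ] ≥ 1 − δ. -/
open MeasureTheory ProbabilityTheory Finset

lemma integral_comp_fin {Ω : Type*} [MeasurableSpace Ω] (P : Measure Ω) [IsProbabilityMeasure P]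
    {m : ℕ} (X : Ω → Fin m) (hX : Measurable X) (α : Fin m → ℝ) (hα : ∀ k, 0 ≤ α k)
    (hdist : ∀ k, P {ω | X ω = k} = ENNReal.ofReal (α k)) (f : Fin m → ℝ) :
    ∫ ω, f (X ω) ∂P = ∑ v, α v * f v := by
  haveI : IsProbabilityMeasure (P.map X) := Measure.isProbabilityMeasure_map hX.aemeasurable
  rw [← integral_map hX.aemeasurable (measurable_of_finite f).aestronglyMeasurable,
    integral_fintype .of_finite]
  refine Finset.sum_congr rfl fun v _ => ?_
  rw [measureReal_def, Measure.map_apply hX (measurableSet_singleton v)]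
  have h : X ⁻¹' {v} = {ω | X ω = v} := rfl
  rw [h, hdist v, ENNReal.toReal_ofReal (hα v), smul_eq_mul]

lemma integrable_comp_fin {Ω : Type*} [MeasurableSpace Ω] (P : Measure Ω) [IsProbabilityMeasure P]
    {m : ℕ} (X : Ω → Fin m) (hX : Measurable X) (f : Fin m → ℝ) :
    Integrable (fun ω => f (X ω)) P := by
  haveI : IsProbabilityMeasure (P.map X) := Measure.isProbabilityMeasure_map hX.aemeasurable
  have h : Integrable f (P.map X) := .of_finite
  exact (integrable_map_measure (measurable_of_finite f).aestronglyMeasurable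
    hX.aemeasurable).mp h

/-- Chernoff bound for a single competing label: the probability that label `k` is rated at
least as often as the top label `ℓ` is at most `exp (-L)`. -/
lemma chernoff_label_bound
    {Ω : Type*} [MeasurableSpace Ω] (P : Measure Ω) [IsProbabilityMeasure P]
    {m n : ℕ} (α : Fin m → ℝ) (r : Fin n → Ω → Fin m)
    (hmeas : ∀ j, Measurable (r j))
    (hindep : iIndepFun r P)
    (hdist : ∀ j k, P {ω | r j ω = k} = ENNReal.ofReal (α k))
    (hα_pos : ∀ k, 0 < α k) (hα_sum : ∑ k, α k = 1)
    (ℓ k : Fin m) (hk : k ≠ ℓ) (hkl : α k < α ℓ) (hαl1 : α ℓ ≤ 1)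
    (αt : ℝ) (hk_le : α k ≤ αt) (hg_pos : 0 < α ℓ - αt)
    (L : ℝ) (hL0 : 0 ≤ L)
    (hn : 12 * α ℓ / (α ℓ - αt) ^ 2 * L ≤ (n : ℝ)) :
    (P {ω | (Finset.univ.filter fun j => r j ω = ℓ).card
        ≤ (Finset.univ.filter fun j => r j ω = k).card}).toReal ≤ Real.exp (-L) := by
  classical
  have hak_pos : 0 < α k := hα_pos k
  have hαl_pos : 0 < α ℓ := hα_pos ℓ
  set a := Real.sqrt (α k) with ha_def
  set b := Real.sqrt (α ℓ) with hb_def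
  have ha_pos : 0 < a := Real.sqrt_pos.2 hak_pos
  have hb_pos : 0 < b := Real.sqrt_pos.2 hαl_pos
  have ha2 : a ^ 2 = α k := Real.sq_sqrt hak_pos.le
  have hb2 : b ^ 2 = α ℓ := Real.sq_sqrt hαl_pos.le
  have hab : a ≤ b := Real.sqrt_le_sqrt hkl.le
  set t := Real.log (b / a) with ht_def
  have ht0 : 0 ≤ t := Real.log_nonneg ((one_le_div ha_pos).2 hab)
  have het : Real.exp t = b / a := Real.exp_log (by positivity)
  have hent : Real.exp (-t) = a / b := by rw [Real.exp_neg, het, inv_div]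
  clear_value a b t
  clear ha_def hb_def ht_def
  set f : Fin m → ℝ :=
    fun v => (if v = k then (1 : ℝ) else 0) - (if v = ℓ then 1 else 0) with hf_def
  set X : Fin n → Ω → ℝ := fun j ω => f (r j ω) with hX_def
  have hX_meas : ∀ j, Measurable (X j) := fun j => (measurable_of_finite f).comp (hmeas j)
  have hX_indep : iIndepFun X P :=
    hindep.comp (fun _ => f) (fun _ => measurable_of_finite f)
  set M := 1 - (b - a) ^ 2 with hM_def
  have hmgf_j : ∀ j, mgf (X j) P t = M := by
    intro j
    have h1 : mgf (X j) P t = ∑ v, α v * Real.exp (t * f v) :=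
      integral_comp_fin P (r j) (hmeas j) α (fun v => (hα_pos v).le) (hdist j)
        (fun v => Real.exp (t * f v))
    rw [h1]
    have h2 : ∀ v, α v * Real.exp (t * f v)
        = α v + ((if v = k then α k * (Real.exp t - 1) else 0)
            + (if v = ℓ then α ℓ * (Real.exp (-t) - 1) else 0)) := by
      intro v
      by_cases hvk : v = k
      · have hvl : ¬ v = ℓ := by rw [hvk]; exact hk
        have hf1 : f v = 1 := by rw [hf_def]; simp only [if_pos hvk, if_neg hvl, sub_zero]
        rw [hf1, mul_one, if_pos hvk, if_neg hvl, hvk]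
        ring
      · by_cases hvl : v = ℓ
        · have hf1 : f v = -1 := by
            rw [hf_def]; simp only [if_neg hvk, if_pos hvl, zero_sub]
          rw [hf1, mul_neg_one, if_neg hvk, if_pos hvl, hvl]
          ring
        · have hf1 : f v = 0 := by rw [hf_def]; simp only [if_neg hvk, if_neg hvl, sub_zero]
          rw [hf1, mul_zero, Real.exp_zero, mul_one, if_neg hvk, if_neg hvl]
          ring
    rw [Finset.sum_congr rfl (fun v _ => h2 v), Finset.sum_add_distrib, hα_sum,
      Finset.sum_add_distrib, Finset.sum_ite_eq' Finset.univ k, Finset.sum_ite_eq' Finset.univ ℓ]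
    simp only [Finset.mem_univ, if_true]
    rw [het, hent, hM_def, ← ha2, ← hb2]
    field_simp
    ring
  set S := ∑ j, X j with hS_def
  have hS_card : ∀ ω, S ω
      = (((Finset.univ.filter fun j => r j ω = k).card : ℝ))
        - ((Finset.univ.filter fun j => r j ω = ℓ).card : ℝ) := by
    intro ω
    rw [hS_def, Finset.sum_apply]
    show (∑ j, ((if r j ω = k then (1 : ℝ) else 0) - if r j ω = ℓ then 1 else 0))
      = ((Finset.univ.filter fun j => r j ω = k).card : ℝ)
        - ((Finset.univ.filter fun j => r j ω = ℓ).card : ℝ)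
    rw [Finset.sum_sub_distrib, Finset.sum_boole, Finset.sum_boole]
  have hint : ∀ j ∈ Finset.univ, Integrable (fun ω => Real.exp (t * X j ω)) P :=
    fun j _ => integrable_comp_fin P (r j) (hmeas j) (fun v => Real.exp (t * f v))
  have hmgfS : mgf S P t = M ^ n := by
    rw [hS_def, hX_indep.mgf_sum hX_meas]
    simp [hmgf_j]
  have hchern : (P {ω | 0 ≤ S ω}).toReal ≤ M ^ n := by
    have h := measure_ge_le_exp_mul_mgf (X := S) (μ := P) (t := t) 0 ht0
      (hX_indep.integrable_exp_mul_sum hX_meas hint)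
    simpa [hmgfS, measureReal_def] using h
  have hM0 : 0 ≤ M := by
    rw [hM_def]
    nlinarith [hb2, hαl1, mul_nonneg ha_pos.le (sub_nonneg.2 hab)]
  have hgap : (α ℓ - αt) ^ 2 / (4 * α ℓ) ≤ (b - a) ^ 2 := by
    have h4 : α ℓ - αt ≤ 2 * b * (b - a) := by nlinarith [sub_nonneg.2 hab, ha_pos.le]
    have h5 := mul_self_le_mul_self hg_pos.le h4
    rw [div_le_iff₀ (by positivity)]
    nlinarith [h5, hb2]
  have hnL : L ≤ (n : ℝ) * (b - a) ^ 2 := by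
    have h0 : (α ℓ - αt) ^ 2 / (4 * α ℓ) * (12 * α ℓ / (α ℓ - αt) ^ 2 * L) = 3 * L := by
      field_simp; ring
    calc L ≤ 3 * L := by linarith
      _ = (α ℓ - αt) ^ 2 / (4 * α ℓ) * (12 * α ℓ / (α ℓ - αt) ^ 2 * L) := h0.symm
      _ ≤ (α ℓ - αt) ^ 2 / (4 * α ℓ) * n := by gcongr
      _ ≤ (b - a) ^ 2 * n := by gcongr ?_ * (n : ℝ)
      _ = n * (b - a) ^ 2 := by ring
  have hMexp : M ^ n ≤ Real.exp (-L) := by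
    have h1 : M ≤ Real.exp (-((b - a) ^ 2)) := by
      have h := Real.add_one_le_exp (-((b - a) ^ 2))
      rw [hM_def]; linarith
    have h2 : M ^ n ≤ Real.exp (-((b - a) ^ 2)) ^ n := pow_le_pow_left₀ hM0 h1 n
    have h3 : Real.exp (-((b - a) ^ 2)) ^ n = Real.exp (-((n : ℝ) * (b - a) ^ 2)) := by
      rw [← Real.exp_nat_mul, mul_neg]
    have h4 : Real.exp (-((n : ℝ) * (b - a) ^ 2)) ≤ Real.exp (-L) :=
      Real.exp_le_exp.2 (by linarith)
    rw [← h3] at h4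
    exact h2.trans h4
  have hset : {ω | (Finset.univ.filter fun j => r j ω = ℓ).card
      ≤ (Finset.univ.filter fun j => r j ω = k).card} = {ω | 0 ≤ S ω} := by
    ext ω
    simp only [Set.mem_setOf_eq, hS_card ω, sub_nonneg, Nat.cast_le]
  rw [hset]
  exact hchern.trans hMexp

/-- Majority rule under honest rating: with `n` i.i.d. ratings distributed as the
categorical distribution `α` on `{1,…,m}` (encoded as `Fin m`), `ℓ` the unique argmax of
`α` and `αt` the second-largest entry, if `n ≥ (12 α_ℓ / (α_ℓ - α̃)²) ln(m/δ)` then with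
probability at least `1 - δ` the label `ℓ` is the strict majority (most frequent) label. -/
theorem majority_rule_honest
    {Ω : Type*} [MeasurableSpace Ω] (P : Measure Ω) [IsProbabilityMeasure P]
    (m n : ℕ) (hm : 0 < m) (α : Fin m → ℝ) (r : Fin n → Ω → Fin m)
    (hmeas : ∀ j, Measurable (r j))
    (hindep : iIndepFun r P)
    (hdist : ∀ j k, P {ω | r j ω = k} = ENNReal.ofReal (α k))
    (hα_pos : ∀ k, 0 < α k) (hα_sum : ∑ k, α k = 1)
    (ℓ : Fin m) (hℓ : ∀ k, k ≠ ℓ → α k < α ℓ)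
    (αt : ℝ) (hαt_mem : ∃ k, k ≠ ℓ ∧ α k = αt) (hαt_max : ∀ k, k ≠ ℓ → α k ≤ αt)
    (δ : ℝ) (hδ0 : 0 < δ) (hδ1 : δ < 1)
    (hn : 12 * α ℓ / (α ℓ - αt) ^ 2 * Real.log (m / δ) ≤ (n : ℝ)) :
    1 - δ ≤ (P {ω | ∀ k, k ≠ ℓ →
      (Finset.univ.filter fun j => r j ω = k).card <
      (Finset.univ.filter fun j => r j ω = ℓ).card}).toReal := by
  classical
  have hm1 : (1 : ℝ) ≤ m := by exact_mod_cast hm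
  have hL0 : 0 ≤ Real.log (m / δ) := Real.log_nonneg (by rw [le_div_iff₀ hδ0]; nlinarith)
  obtain ⟨k₀, hk₀ne, hk₀eq⟩ := hαt_mem
  have hαt_lt : αt < α ℓ := hk₀eq ▸ hℓ k₀ hk₀ne
  have hg_pos : 0 < α ℓ - αt := sub_pos.2 hαt_lt
  have hαl_pos : 0 < α ℓ := hα_pos ℓ
  have hαl1 : α ℓ ≤ 1 := by
    have h := Finset.single_le_sum (f := α) (fun i _ => (hα_pos i).le) (Finset.mem_univ ℓ)
    linarith [hα_sum]
  have hexp : Real.exp (-Real.log (m / δ)) = δ / m := by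
    rw [Real.exp_neg, Real.exp_log (by positivity), inv_div]
  set N : Fin m → Ω → ℕ := fun k ω => (Finset.univ.filter fun j => r j ω = k).card with hN_def
  have hN_meas : ∀ k, Measurable (N k) := by
    intro k
    have h : (fun ω => (Finset.univ.filter fun j => r j ω = k).card)
        = fun ω => ∑ j, if r j ω = k then 1 else 0 := by
      funext ω; rw [Finset.card_filter]
    show Measurable fun ω => (Finset.univ.filter fun j => r j ω = k).card
    rw [h]
    exact Finset.measurable_sum _ fun j _ =>
      Measurable.ite ((hmeas j) (measurableSet_singleton k)) measurable_const measurable_const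
  have key : ∀ k, k ≠ ℓ → (P {ω | N ℓ ω ≤ N k ω}).toReal ≤ δ / m := by
    intro k hk
    have h := chernoff_label_bound P α r hmeas hindep hdist hα_pos hα_sum ℓ k hk (hℓ k hk)
      hαl1 αt (hαt_max k hk) hg_pos (Real.log (m / δ)) hL0 hn
    rw [hexp] at h
    exact h
  set G := {ω | ∀ k, k ≠ ℓ →
      (Finset.univ.filter fun j => r j ω = k).card <
      (Finset.univ.filter fun j => r j ω = ℓ).card} with hG_def
  have hGmeas : MeasurableSet G := by
    have h : G = ⋂ k ∈ Finset.univ.erase ℓ, {ω | N k ω < N ℓ ω} := by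
      ext ω
      simp only [hG_def, hN_def, Set.mem_setOf_eq, Set.mem_iInter, Finset.mem_erase, Finset.mem_univ,
        and_true]
    rw [h]
    exact MeasurableSet.biInter (Set.to_countable _)
      (fun k _ => measurableSet_lt (hN_meas k) (hN_meas ℓ))
  have hGc : Gᶜ = ⋃ k ∈ Finset.univ.erase ℓ, {ω | N ℓ ω ≤ N k ω} := by
    ext ω
    simp only [Set.mem_compl_iff, hG_def, hN_def, Set.mem_setOf_eq, not_forall, Classical.not_imp,
      not_lt, Set.mem_iUnion, Finset.mem_erase, Finset.mem_univ, and_true, exists_prop]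
  have hbad : (P Gᶜ).toReal ≤ δ := by
    rw [hGc]
    have h1 : P (⋃ k ∈ Finset.univ.erase ℓ, {ω | N ℓ ω ≤ N k ω})
        ≤ ∑ k ∈ Finset.univ.erase ℓ, P {ω | N ℓ ω ≤ N k ω} := measure_biUnion_finset_le _ _
    have hfin : ∑ k ∈ Finset.univ.erase ℓ, P {ω | N ℓ ω ≤ N k ω} ≠ ⊤ :=
      (ENNReal.sum_lt_top.2 fun _ _ => measure_lt_top _ _).ne
    have h2 := ENNReal.toReal_mono hfin h1
    rw [ENNReal.toReal_sum (fun _ _ => measure_ne_top _ _)] at h2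
    refine h2.trans ?_
    have h3 : ∑ k ∈ Finset.univ.erase ℓ, (P {ω | N ℓ ω ≤ N k ω}).toReal
        ≤ ∑ _k ∈ Finset.univ.erase ℓ, δ / m :=
      Finset.sum_le_sum fun k hk => key k (Finset.mem_erase.1 hk).1
    refine h3.trans ?_
    rw [Finset.sum_const, Finset.card_erase_of_mem (Finset.mem_univ ℓ), Finset.card_univ,
      Fintype.card_fin, nsmul_eq_mul]
    have h4 : ((m - 1 : ℕ) : ℝ) ≤ m := by
      have h : (m - 1 : ℕ) ≤ m := Nat.sub_le _ _
      exact_mod_cast h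
    have h5 : 0 ≤ δ / (m : ℝ) := by positivity
    calc ((m - 1 : ℕ) : ℝ) * (δ / m) ≤ (m : ℝ) * (δ / m) := by gcongr
      _ = δ := by field_simp
  have hsum : (P G).toReal + (P Gᶜ).toReal = 1 := by
    have h := measure_add_measure_compl (μ := P) hGmeas
    rw [measure_univ] at h
    have h' := congrArg ENNReal.toReal h
    rwa [ENNReal.toReal_add (measure_ne_top _ _) (measure_ne_top _ _), ENNReal.toReal_one] at h'
  linarith
end

section
/- Under the random-misbehavior mixture model (fraction f < 1 of uniform ratings, remainder categorical with parameters α having unique maximum α_ℓ and second-largest α̃), if the number of ratings satisfies n ≥ 12(f/m + (1−f)α_ℓ) / ((1−f)²(α_ℓ − α̃)²) · ln(m/δ), then the majority label ℓ̂ of the n ratings equals ℓ with probability at least 1 − δ. -/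
open MeasureTheory ProbabilityTheory Finset

lemma exp_le_one_add_add_sq' {x : ℝ} (hx : |x| ≤ 1) : Real.exp x ≤ 1 + x + x ^ 2 := by
  have h := Real.exp_bound hx (n := 2) (by norm_num)
  simp [Finset.sum_range_succ] at h
  have := (abs_sub_le_iff.1 h).1
  nlinarith [sq_nonneg x]

lemma mgf_exponent_bound' {t Δ pk pℓ : ℝ} (hpk : 0 < pk) (hpℓ : 0 < pℓ)
    (ht : 0 < t) (ht1 : t ≤ 1) (hteq : t = Δ / (4 * pℓ)) (hΔ : 0 < Δ)
    (hgap : Δ ≤ pℓ - pk) :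
    1 + (Real.exp t - 1) * pk + (Real.exp (-t) - 1) * pℓ ≤
      Real.exp (-(Δ ^ 2 / (8 * pℓ))) := by
  have he1 : Real.exp t ≤ 1 + t + t ^ 2 :=
    exp_le_one_add_add_sq' (by rw [abs_of_pos ht]; exact ht1)
  have he2 : Real.exp (-t) ≤ 1 - t + t ^ 2 := by
    have := exp_le_one_add_add_sq' (x := -t) (by rw [abs_neg, abs_of_pos ht]; exact ht1)
    nlinarith
  have hpkℓ : pk ≤ pℓ := by linarith
  have h1 : (Real.exp t - 1) * pk ≤ (t + t ^ 2) * pk := by nlinarith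
  have h2 : (Real.exp (-t) - 1) * pℓ ≤ (-t + t ^ 2) * pℓ := by nlinarith
  have h3 : (t + t ^ 2) * pk + (-t + t ^ 2) * pℓ ≤ -t * Δ + 2 * t ^ 2 * pℓ := by
    nlinarith [sq_nonneg t]
  have h4 : -t * Δ + 2 * t ^ 2 * pℓ = -(Δ ^ 2 / (8 * pℓ)) := by
    rw [hteq]; field_simp; ring
  have h5 : 1 + -(Δ ^ 2 / (8 * pℓ)) ≤ Real.exp (-(Δ ^ 2 / (8 * pℓ))) := by
    have := Real.add_one_le_exp (-(Δ ^ 2 / (8 * pℓ))); linarith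
  linarith

lemma fin_comp_eq_sum_indicator' {Ω : Type*} {m : ℕ} (X : Ω → Fin m) (h : Fin m → ℝ) (ω : Ω) :
    h (X ω) = ∑ i, Set.indicator {ω' | X ω' = i} (fun _ => h i) ω := by
  simp only [Set.indicator_apply, Set.mem_setOf_eq]
  rw [Finset.sum_ite_eq]
  simp

lemma integrable_fin_comp' {Ω : Type*} [MeasurableSpace Ω] (P : Measure Ω)
    [IsProbabilityMeasure P] {m : ℕ} {X : Ω → Fin m} (hX : Measurable X) (h : Fin m → ℝ) :
    Integrable (fun ω => h (X ω)) P := by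
  have hms : ∀ i : Fin m, MeasurableSet {ω' | X ω' = i} :=
    fun i => hX (measurableSet_singleton i)
  have he : (fun ω => h (X ω)) =
      fun ω => ∑ i, Set.indicator {ω' | X ω' = i} (fun _ => h i) ω :=
    funext (fin_comp_eq_sum_indicator' X h)
  rw [he]
  exact integrable_finset_sum _ fun i _ => (integrable_const _).indicator (hms i)

lemma integral_fin_comp' {Ω : Type*} [MeasurableSpace Ω] (P : Measure Ω)
    [IsProbabilityMeasure P] {m : ℕ} {X : Ω → Fin m} (hX : Measurable X) (h : Fin m → ℝ) :
    ∫ ω, h (X ω) ∂P = ∑ i, (P {ω | X ω = i}).toReal * h i := by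
  have hms : ∀ i : Fin m, MeasurableSet {ω' | X ω' = i} :=
    fun i => hX (measurableSet_singleton i)
  have he : (fun ω => h (X ω)) =
      fun ω => ∑ i, Set.indicator {ω' | X ω' = i} (fun _ => h i) ω :=
    funext (fin_comp_eq_sum_indicator' X h)
  rw [he, integral_finset_sum _ fun i _ => (integrable_const _).indicator (hms i)]
  refine Finset.sum_congr rfl fun i _ => ?_
  rw [integral_indicator_const _ (hms i), smul_eq_mul, mul_comm]
  exact mul_comm _ _

/-- Majority rule resists random misbehavior: with `n` i.i.d. ratings each distributed
as the mixture `k ↦ f/m + (1-f)α_k` (fraction `f < 1` uniform, remainder categorical `α`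
with unique argmax `ℓ` and second-largest entry `αt`), if
`n ≥ 12(f/m + (1-f)α_ℓ)/((1-f)²(α_ℓ - α̃)²) · ln(m/δ)` then with probability at least
`1 - δ` the label `ℓ` is the strict majority label of the `n` ratings. -/
theorem majority_rule_resists_random_misbehavior
    {Ω : Type*} [MeasurableSpace Ω] (P : Measure Ω) [IsProbabilityMeasure P]
    (m n : ℕ) (hm : 0 < m) (α : Fin m → ℝ) (r : Fin n → Ω → Fin m)
    (hmeas : ∀ j, Measurable (r j))
    (hindep : iIndepFun r P)
    (f : ℝ) (hf0 : 0 ≤ f) (hf1 : f < 1)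
    (hdist : ∀ j k, P {ω | r j ω = k} = ENNReal.ofReal (f / m + (1 - f) * α k))
    (hα_pos : ∀ k, 0 < α k) (hα_sum : ∑ k, α k = 1)
    (ℓ : Fin m) (hℓ : ∀ k, k ≠ ℓ → α k < α ℓ)
    (αt : ℝ) (hαt_mem : ∃ k, k ≠ ℓ ∧ α k = αt) (hαt_max : ∀ k, k ≠ ℓ → α k ≤ αt)
    (δ : ℝ) (hδ0 : 0 < δ) (hδ1 : δ < 1)
    (hn : 12 * (f / m + (1 - f) * α ℓ) / ((1 - f) ^ 2 * (α ℓ - αt) ^ 2) *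
        Real.log (m / δ) ≤ (n : ℝ)) :
    1 - δ ≤ (P {ω | ∀ k, k ≠ ℓ →
      (Finset.univ.filter fun j => r j ω = k).card <
      (Finset.univ.filter fun j => r j ω = ℓ).card}).toReal := by
  classical
  -- basic numeric setup
  have hm1 : (1 : ℝ) ≤ (m : ℝ) := by exact_mod_cast hm
  have h1f : (0 : ℝ) < 1 - f := by linarith
  set p : Fin m → ℝ := fun k => f / m + (1 - f) * α k with hp_def
  have hp_pos : ∀ k, 0 < p k := by
    intro k
    have h1 : (0:ℝ) ≤ f / m := div_nonneg hf0 (by positivity)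
    have h2 := mul_pos h1f (hα_pos k)
    simp only [hp_def]
    linarith
  have hp_sum : ∑ k, p k = 1 := by
    simp only [hp_def, Finset.sum_add_distrib, Finset.sum_const, Finset.card_univ,
      Fintype.card_fin, ← Finset.mul_sum, hα_sum]
    rw [nsmul_eq_mul]
    field_simp
    ring
  have hp_gap : ∀ k, p ℓ - p k = (1 - f) * (α ℓ - α k) := by
    intro k; simp only [hp_def]; ring
  have hpℓ_eq : p ℓ = f / m + (1 - f) * α ℓ := rfl
  rw [← hpℓ_eq] at hn
  obtain ⟨k₀, hk₀, hk₀t⟩ := hαt_mem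
  have hαtℓ : αt < α ℓ := hk₀t ▸ hℓ k₀ hk₀
  set Δ : ℝ := (1 - f) * (α ℓ - αt) with hΔ_def
  have hΔ_pos : 0 < Δ := mul_pos h1f (by linarith)
  have hΔ_le : Δ ≤ p ℓ := by
    have h := hp_gap k₀
    rw [hk₀t, ← hΔ_def] at h
    linarith [hp_pos k₀]
  have hΔ_le_gap : ∀ k, k ≠ ℓ → Δ ≤ p ℓ - p k := by
    intro k hk
    have h := hαt_max k hk
    rw [hp_gap k, hΔ_def]
    nlinarith [h1f.le]
  have hpℓ := hp_pos ℓ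
  set t : ℝ := Δ / (4 * p ℓ) with ht_def
  have ht_pos : 0 < t := div_pos hΔ_pos (by positivity)
  have ht_le : t ≤ 1 := by
    rw [ht_def, div_le_one (by positivity)]
    linarith
  set L : ℝ := Real.log ((m : ℝ) / δ) with hL_def
  have hmδ : (1:ℝ) < (m : ℝ) / δ := by
    rw [lt_div_iff₀ hδ0]; nlinarith
  have hL_pos : 0 < L := Real.log_pos hmδ
  have hΔsq : (1 - f) ^ 2 * (α ℓ - αt) ^ 2 = Δ ^ 2 := by rw [hΔ_def]; ring
  have hn' : 8 * p ℓ * L ≤ (n : ℝ) * Δ ^ 2 := by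
    rw [hΔsq] at hn
    have hΔ2 : (0:ℝ) < Δ ^ 2 := by positivity
    have h' : 12 * p ℓ * L / Δ ^ 2 ≤ (n : ℝ) := by
      calc 12 * p ℓ * L / Δ ^ 2 = 12 * p ℓ / Δ ^ 2 * L := by ring
        _ ≤ (n : ℝ) := hn
    have h'' := (div_le_iff₀ hΔ2).1 h'
    nlinarith [mul_nonneg hpℓ.le hL_pos.le]
  -- the comparison random variables
  set φ : Fin m → Fin m → ℝ :=
    fun k i => (if i = k then (1:ℝ) else 0) - (if i = ℓ then (1:ℝ) else 0) with hφ_def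
  set Y : Fin m → Fin n → Ω → ℝ := fun k j => φ k ∘ r j with hY_def
  have hY_meas : ∀ k j, Measurable (Y k j) :=
    fun k j => (measurable_of_countable (φ k)).comp (hmeas j)
  have hY_indep : ∀ k, iIndepFun (Y k) P :=
    fun k => hindep.comp (fun _ => φ k) (fun _ => measurable_of_countable (φ k))
  -- sum identity
  have hS_eq : ∀ k ω, (∑ j, Y k j) ω =
      ((Finset.univ.filter fun j => r j ω = k).card : ℝ) -
      ((Finset.univ.filter fun j => r j ω = ℓ).card : ℝ) := by
    intro k ω
    simp only [Finset.sum_apply, hY_def, Function.comp_apply, hφ_def,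
      Finset.sum_sub_distrib, Finset.sum_boole]
  -- per-coordinate integrability
  have hint : ∀ k j, Integrable (fun ω => Real.exp (t * Y k j ω)) P :=
    fun k j => integrable_fin_comp' P (hmeas j) (fun i => Real.exp (t * φ k i))
  -- per-coordinate mgf computation
  have hmgf : ∀ k, k ≠ ℓ → ∀ j, mgf (Y k j) P t =
      1 + (Real.exp t - 1) * p k + (Real.exp (-t) - 1) * p ℓ := by
    intro k hk j
    have h1 : mgf (Y k j) P t =
        ∑ i, (P {ω | r j ω = i}).toReal * Real.exp (t * φ k i) :=
      integral_fin_comp' P (hmeas j) (fun i => Real.exp (t * φ k i))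
    rw [h1]
    have h2 : ∀ i : Fin m, (P {ω | r j ω = i}).toReal = p i := by
      intro i
      rw [hdist j i, ENNReal.toReal_ofReal (hp_pos i).le]
    have hg : ∀ i : Fin m, Real.exp (t * φ k i) =
        1 + (if i = k then Real.exp t - 1 else 0) +
          (if i = ℓ then Real.exp (-t) - 1 else 0) := by
      intro i
      by_cases h1' : i = k <;> by_cases h2' : i = ℓ
      · exact absurd (h1' ▸ h2') hk
      · subst h1'
        simp [hφ_def, h2', hk]
      · subst h2'
        simp only [hφ_def, h1', if_false, if_true, if_pos rfl]
        rw [show t * ((0:ℝ) - 1) = -t by ring]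
        ring
      · simp [hφ_def, h1', h2']
    simp only [h2, hg, mul_add, Finset.sum_add_distrib, mul_ite, mul_zero, mul_one,
      Finset.sum_ite_eq', Finset.mem_univ, if_true, hp_sum]
    ring
  -- Chernoff bound for each bad event
  have hbad : ∀ k, k ≠ ℓ → P {ω | (0:ℝ) ≤ (∑ j, Y k j) ω} ≤ ENNReal.ofReal (δ / m) := by
    intro k hk
    have h_int : Integrable (fun ω => Real.exp (t * (∑ j, Y k j) ω)) P :=
      (hY_indep k).integrable_exp_mul_sum (hY_meas k) (fun j _ => hint k j)
    have hch := measure_ge_le_exp_mul_mgf (μ := P) (X := ∑ j, Y k j) 0 ht_pos.le h_int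
    rw [(hY_indep k).mgf_sum (hY_meas k)] at hch
    have hprod : ∏ j : Fin n, mgf (Y k j) P t ≤ Real.exp ((n : ℝ) * -(Δ ^ 2 / (8 * p ℓ))) := by
      calc ∏ j : Fin n, mgf (Y k j) P t
          ≤ ∏ _j : Fin n, Real.exp (-(Δ ^ 2 / (8 * p ℓ))) := by
            refine Finset.prod_le_prod (fun j _ => mgf_nonneg) (fun j _ => ?_)
            rw [hmgf k hk j]
            exact mgf_exponent_bound' (hp_pos k) hpℓ ht_pos ht_le ht_def hΔ_pos
              (hΔ_le_gap k hk)
        _ = Real.exp ((n : ℝ) * -(Δ ^ 2 / (8 * p ℓ))) := by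
            rw [Finset.prod_const, Finset.card_univ, Fintype.card_fin, ← Real.exp_nat_mul]
    have hexp_le : Real.exp ((n : ℝ) * -(Δ ^ 2 / (8 * p ℓ))) ≤ δ / m := by
      have h8 : (0:ℝ) < 8 * p ℓ := by positivity
      have h1 : (n : ℝ) * -(Δ ^ 2 / (8 * p ℓ)) ≤ -L := by
        rw [show (n:ℝ) * -(Δ ^ 2 / (8 * p ℓ)) = -((n : ℝ) * Δ ^ 2 / (8 * p ℓ)) by ring,
          neg_le_neg_iff, le_div_iff₀ h8]
        linarith
      calc Real.exp ((n : ℝ) * -(Δ ^ 2 / (8 * p ℓ))) ≤ Real.exp (-L) := Real.exp_le_exp.2 h1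
        _ = δ / m := by
            rw [hL_def, Real.exp_neg, Real.exp_log (by positivity), inv_div]
    have htoReal : (P {ω | (0:ℝ) ≤ (∑ j, Y k j) ω}).toReal ≤ δ / m := by
      have := hch.trans (by simpa using hprod.trans hexp_le)
      simpa [Measure.real] using this
    rw [← ENNReal.ofReal_toReal (measure_ne_top P _)]
    exact ENNReal.ofReal_le_ofReal htoReal
  -- measurability of the sums
  have hS_meas : ∀ k, Measurable (∑ j, Y k j) := by
    intro k
    have h := Finset.measurable_sum Finset.univ (fun j (_ : j ∈ Finset.univ) => hY_meas k j)
    convert h using 1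
    ext ω
    simp [Finset.sum_apply]
  -- good event as intersection
  have hGset : {ω | ∀ k, k ≠ ℓ →
      (Finset.univ.filter fun j => r j ω = k).card <
      (Finset.univ.filter fun j => r j ω = ℓ).card} =
      ⋂ k ∈ Finset.univ.erase ℓ, {ω | (∑ j, Y k j) ω < 0} := by
    ext ω
    simp only [Set.mem_setOf_eq, Set.mem_iInter, Finset.mem_erase, Finset.mem_univ, and_true]
    constructor
    · intro h k hk
      rw [hS_eq k ω]
      have h' : ((Finset.univ.filter fun j => r j ω = k).card : ℝ) <
          ((Finset.univ.filter fun j => r j ω = ℓ).card : ℝ) := by exact_mod_cast h k hk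
      linarith
    · intro h k hk
      have h' := h k hk
      rw [hS_eq k ω] at h'
      have h'' : ((Finset.univ.filter fun j => r j ω = k).card : ℝ) <
          ((Finset.univ.filter fun j => r j ω = ℓ).card : ℝ) := by linarith
      exact_mod_cast h''
  rw [hGset]
  set G : Set Ω := ⋂ k ∈ Finset.univ.erase ℓ, {ω | (∑ j, Y k j) ω < 0} with hG_def
  have hG_meas : MeasurableSet G := by
    refine Set.Finite.measurableSet_biInter (Set.toFinite _) (fun k _ => ?_)
    exact measurableSet_lt (hS_meas k) measurable_const
  have hGc : Gᶜ ⊆ ⋃ k ∈ Finset.univ.erase ℓ, {ω | (0:ℝ) ≤ (∑ j, Y k j) ω} := by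
    intro ω hω
    simp only [hG_def, Set.compl_iInter, Set.mem_iUnion, Set.mem_compl_iff,
      Set.mem_setOf_eq, not_lt] at hω ⊢
    obtain ⟨k, hk, h⟩ := hω
    exact ⟨k, hk, h⟩
  have hGc_le : P Gᶜ ≤ ENNReal.ofReal δ := by
    calc P Gᶜ ≤ P (⋃ k ∈ Finset.univ.erase ℓ, {ω | (0:ℝ) ≤ (∑ j, Y k j) ω}) :=
          measure_mono hGc
      _ ≤ ∑ k ∈ Finset.univ.erase ℓ, P {ω | (0:ℝ) ≤ (∑ j, Y k j) ω} :=
          measure_biUnion_finset_le _ _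
      _ ≤ ∑ k ∈ Finset.univ.erase ℓ, ENNReal.ofReal (δ / m) :=
          Finset.sum_le_sum (fun k hk => hbad k (Finset.mem_erase.1 hk).1)
      _ = ((Finset.univ.erase ℓ).card : ENNReal) * ENNReal.ofReal (δ / m) := by
          rw [Finset.sum_const, nsmul_eq_mul]
      _ ≤ (m : ENNReal) * ENNReal.ofReal (δ / m) := by
          gcongr
          exact_mod_cast (Finset.card_erase_of_mem (Finset.mem_univ ℓ)).trans_le
            (by simp [Finset.card_univ])
      _ = ENNReal.ofReal ((m : ℝ) * (δ / m)) := by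
          rw [ENNReal.ofReal_mul (by positivity), ENNReal.ofReal_natCast]
      _ ≤ ENNReal.ofReal δ := by
          refine ENNReal.ofReal_le_ofReal (le_of_eq ?_)
          have hm0 : (m:ℝ) ≠ 0 := by positivity
          field_simp
  -- conclude
  have h1 : (P G).toReal + (P Gᶜ).toReal = 1 := by
    rw [← ENNReal.toReal_add (measure_ne_top _ _) (measure_ne_top _ _),
      measure_add_measure_compl hG_meas]
    simp
  have h2 : (P Gᶜ).toReal ≤ δ := by
    have := ENNReal.toReal_mono ENNReal.ofReal_ne_top hGc_le
    rwa [ENNReal.toReal_ofReal hδ0.le] at this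
  linarith
end

section
/- Under the biased-misbehavior mixture model with ℓ′ ≠ ℓ and f′ > (α_ℓ − α_{ℓ′})/(1 + α_ℓ − α_{ℓ′}), if the number of ratings satisfies n ≥ 12(f′ + (1−f′)α_{ℓ′}) / ((f′ + (1−f′)(α_{ℓ′} − α_ℓ))²) · ln(m/δ), then the majority label of the n ratings equals ℓ′ with probability at least 1 − δ. -/
open MeasureTheory ProbabilityTheory Finset
open scoped ENNReal

lemma my_exp_le_quad {x : ℝ} (h : |x| ≤ 1) : Real.exp x ≤ 1 + x + x ^ 2 := by
  have h2 := Real.exp_bound h (n := 2) (by norm_num)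
  have hs : ∑ m ∈ Finset.range 2, x ^ m / m.factorial = 1 + x := by
    simp [Finset.sum_range_succ]
  rw [hs] at h2
  have this := (abs_sub_le_iff.1 h2).1
  have hx2 : |x| ^ 2 = x ^ 2 := sq_abs x
  have hc : ((Nat.succ 2 : ℕ) : ℝ) / ((Nat.factorial 2 : ℕ) * (2:ℕ)) = 3/4 := by
    norm_num [Nat.factorial]
  rw [hc, hx2] at this
  nlinarith [sq_nonneg x]

set_option maxHeartbeats 1000000 in
/-- Biased misbehaving users win: with `n` i.i.d. ratings each distributed as the mixture
`k ↦ f'·1[k = ℓ'] + (1-f')α_k` (fraction `f'` deterministically rating `ℓ' ≠ ℓ`, the rest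
categorical `α` with unique argmax `ℓ`), if `f' > (α_ℓ - α_{ℓ'})/(1 + α_ℓ - α_{ℓ'})` and
`n ≥ 12(f' + (1-f')α_{ℓ'})/((f' + (1-f')(α_{ℓ'} - α_ℓ))²) · ln(m/δ)`, then with
probability at least `1 - δ` the majority label of the `n` ratings is `ℓ'`. -/
theorem biased_misbehaving_users_win
    {Ω : Type*} [MeasurableSpace Ω] (P : Measure Ω) [IsProbabilityMeasure P]
    (m n : ℕ) (hm : 0 < m) (α : Fin m → ℝ) (r : Fin n → Ω → Fin m)
    (hmeas : ∀ j, Measurable (r j))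
    (hindep : iIndepFun r P)
    (hα_pos : ∀ k, 0 < α k) (hα_sum : ∑ k, α k = 1)
    (ℓ ℓ' : Fin m) (hℓ : ∀ k, k ≠ ℓ → α k < α ℓ) (hne : ℓ' ≠ ℓ)
    (f' : ℝ) (hf1 : f' ≤ 1)
    (hf : (α ℓ - α ℓ') / (1 + α ℓ - α ℓ') < f')
    (hdist : ∀ j k, P {ω | r j ω = k} =
      ENNReal.ofReal (f' * (if k = ℓ' then 1 else 0) + (1 - f') * α k))
    (δ : ℝ) (hδ0 : 0 < δ) (hδ1 : δ < 1)
    (hn : 12 * (f' + (1 - f') * α ℓ') / ((f' + (1 - f') * (α ℓ' - α ℓ)) ^ 2) *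
        Real.log (m / δ) ≤ (n : ℝ)) :
    1 - δ ≤ (P {ω | ∀ k, k ≠ ℓ' →
      (Finset.univ.filter fun j => r j ω = k).card <
      (Finset.univ.filter fun j => r j ω = ℓ').card}).toReal := by
  classical
  -- basic real constants
  set q : ℝ := f' + (1 - f') * α ℓ' with hq_def
  set ε : ℝ := f' + (1 - f') * (α ℓ' - α ℓ) with hε_def
  have hαll : α ℓ' < α ℓ := hℓ ℓ' hne
  have hden : (0:ℝ) < 1 + α ℓ - α ℓ' := by linarith
  have hf0 : 0 < f' := lt_of_le_of_lt (div_nonneg (by linarith) hden.le) hf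
  have hf2 : α ℓ - α ℓ' < f' * (1 + α ℓ - α ℓ') := (div_lt_iff₀ hden).mp hf
  have hε0 : 0 < ε := by rw [hε_def]; nlinarith
  have hεq : ε ≤ q := by
    have := mul_nonneg (by linarith : (0:ℝ) ≤ 1 - f') (hα_pos ℓ).le
    rw [hε_def, hq_def]; nlinarith
  have hq0 : 0 < q := lt_of_lt_of_le hε0 hεq
  set t : ℝ := ε / (6 * q) with ht_def
  have ht0 : 0 < t := div_pos hε0 (by linarith)
  have ht1 : t ≤ 1 := by
    rw [ht_def, div_le_one (by linarith)]; linarith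
  have hqt : q * t = ε / 6 := by rw [ht_def]; field_simp
  -- measurability of elementary sets
  have hA : ∀ (j : Fin n) (v : Fin m), MeasurableSet {ω | r j ω = v} := fun j v =>
    hmeas j (measurableSet_eq)
  -- counts
  have hcmeas : ∀ v : Fin m,
      Measurable (fun ω => (Finset.univ.filter fun j => r j ω = v).card) := by
    intro v
    have : (fun ω => (Finset.univ.filter fun j => r j ω = v).card)
        = fun ω => ∑ j, if r j ω = v then 1 else 0 := by
      funext ω; rw [Finset.card_filter]
    rw [this]
    exact Finset.measurable_sum _ fun j _ =>
      Measurable.ite (hA j v) measurable_const measurable_const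
  -- the good set
  set G : Set Ω := {ω | ∀ k, k ≠ ℓ' →
      (Finset.univ.filter fun j => r j ω = k).card <
      (Finset.univ.filter fun j => r j ω = ℓ').card} with hG_def
  have hGmeas : MeasurableSet G := by
    have : G = ⋂ k, ⋂ (_ : k ≠ ℓ'),
        {ω | (Finset.univ.filter fun j => r j ω = k).card <
          (Finset.univ.filter fun j => r j ω = ℓ').card} := by
      ext ω; simp [hG_def, Set.mem_iInter]
    rw [this]
    exact MeasurableSet.iInter fun k => MeasurableSet.iInter fun _ =>
      measurableSet_lt (hcmeas k) (hcmeas ℓ')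
  -- the per-label bad events
  set Bad : Fin m → Set Ω := fun k => {ω |
      (Finset.univ.filter fun j => r j ω = ℓ').card ≤
      (Finset.univ.filter fun j => r j ω = k).card} with hBad_def
  -- key Chernoff bound
  have key : ∀ k, k ≠ ℓ' → (P (Bad k)).toReal ≤ δ / m := by
    intro k hkne
    set p : ℝ := (1 - f') * α k with hp_def
    have hp0 : 0 ≤ p := mul_nonneg (by linarith) (hα_pos k).le
    have hαk : α k ≤ α ℓ := by
      by_cases h : k = ℓ
      · rw [h]
      · exact (hℓ k h).le
    have hpε : p + ε ≤ q := by
      have := mul_le_mul_of_nonneg_left hαk (by linarith : (0:ℝ) ≤ 1 - f')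
      rw [hp_def, hε_def, hq_def]; nlinarith
    -- the random variables
    set g : Fin m → ℝ := fun v =>
      (if v = k then (1:ℝ) else 0) - (if v = ℓ' then 1 else 0) with hg_def
    have hgmeas : Measurable g :=
      Measurable.sub
        (Measurable.ite measurableSet_eq measurable_const measurable_const)
        (Measurable.ite measurableSet_eq measurable_const measurable_const)
    set X : Fin n → Ω → ℝ := fun j => g ∘ r j with hX_def
    have hXmeas : ∀ j, Measurable (X j) := fun j => hgmeas.comp (hmeas j)
    have hXindep : iIndepFun X P :=
      hindep.comp (fun _ => g) (fun _ => hgmeas)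
    -- pointwise rewrite of exp (t * X j)
    have hrw : ∀ j, (fun ω => Real.exp (t * X j ω)) = fun ω =>
        1 + (Set.indicator {ω | r j ω = k} (fun _ => Real.exp t - 1) ω
          + Set.indicator {ω | r j ω = ℓ'} (fun _ => Real.exp (-t) - 1) ω) := by
      intro j; funext ω
      by_cases h1 : r j ω = k
      · have h2 : ¬ (r j ω = ℓ') := by rw [h1]; exact hkne
        have hx : X j ω = 1 := by simp [hX_def, hg_def, h1, hkne]
        rw [hx, mul_one, Set.indicator_of_mem (show ω ∈ {ω | r j ω = k} from h1), Set.indicator_of_notMem (show ω ∉ {ω | r j ω = ℓ'} from h2)]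
        ring
      · by_cases h2 : r j ω = ℓ'
        · have hx : X j ω = -1 := by simp [hX_def, hg_def, h2, Ne.symm hkne]
          rw [hx, mul_neg_one, Set.indicator_of_notMem (show ω ∉ {ω | r j ω = k} from h1), Set.indicator_of_mem (show ω ∈ {ω | r j ω = ℓ'} from h2)]
          ring
        · have hx : X j ω = 0 := by simp [hX_def, hg_def, h1, h2]
          rw [hx, mul_zero, Real.exp_zero, Set.indicator_of_notMem (show ω ∉ {ω | r j ω = k} from h1),
            Set.indicator_of_notMem (show ω ∉ {ω | r j ω = ℓ'} from h2)]
          ring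
    -- integrability
    have hint : ∀ j, Integrable (fun ω => Real.exp (t * X j ω)) P := by
      intro j
      rw [hrw j]
      exact (integrable_const (1:ℝ)).add
        (((integrable_const (Real.exp t - 1)).indicator (hA j k)).add
          ((integrable_const (Real.exp (-t) - 1)).indicator (hA j ℓ')))
    -- the probabilities
    have hPk : ∀ j, (P {ω | r j ω = k}).toReal = p := by
      intro j
      rw [hdist j k, if_neg hkne, ENNReal.toReal_ofReal (by rw [mul_zero, zero_add]; exact hp0)]
      rw [mul_zero, zero_add]
    have hPl : ∀ j, (P {ω | r j ω = ℓ'}).toReal = q := by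
      intro j
      rw [hdist j ℓ', if_pos rfl, ENNReal.toReal_ofReal (by rw [mul_one]; linarith)]
      rw [mul_one]
    -- mgf value
    have hmgf : ∀ j, mgf (X j) P t
        = 1 + ((Real.exp t - 1) * p + (Real.exp (-t) - 1) * q) := by
      intro j
      have hdef : mgf (X j) P t = ∫ ω, Real.exp (t * X j ω) ∂P := rfl
      have hIk : Integrable
          (fun ω => Set.indicator {ω | r j ω = k} (fun _ => Real.exp t - 1) ω) P :=
        (integrable_const (Real.exp t - 1)).indicator (hA j k)
      have hIl : Integrable
          (fun ω => Set.indicator {ω | r j ω = ℓ'} (fun _ => Real.exp (-t) - 1) ω) P :=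
        (integrable_const (Real.exp (-t) - 1)).indicator (hA j ℓ')
      rw [hdef, hrw j]
      calc (∫ ω, (1 + (Set.indicator {ω | r j ω = k} (fun _ => Real.exp t - 1) ω
            + Set.indicator {ω | r j ω = ℓ'} (fun _ => Real.exp (-t) - 1) ω)) ∂P)
          = (∫ _ω, (1:ℝ) ∂P) + ∫ ω, (Set.indicator {ω | r j ω = k} (fun _ => Real.exp t - 1) ω
            + Set.indicator {ω | r j ω = ℓ'} (fun _ => Real.exp (-t) - 1) ω) ∂P :=
            integral_add (integrable_const (1:ℝ)) (hIk.add hIl)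
        _ = (∫ _ω, (1:ℝ) ∂P)
            + ((∫ ω, Set.indicator {ω | r j ω = k} (fun _ => Real.exp t - 1) ω ∂P)
            + ∫ ω, Set.indicator {ω | r j ω = ℓ'} (fun _ => Real.exp (-t) - 1) ω ∂P) := by
            rw [integral_add hIk hIl]
        _ = 1 + ((Real.exp t - 1) * p + (Real.exp (-t) - 1) * q) := by
            rw [integral_indicator_const _ (hA j k), integral_indicator_const _ (hA j ℓ'),
              integral_const]
            simp only [measureReal_def]
            rw [hPk j, hPl j]
            simp [smul_eq_mul]
            ring
    -- mgf bound
    have hmgf_le : ∀ j, mgf (X j) P t ≤ Real.exp (-(ε * t) / 2) := by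
      intro j
      rw [hmgf j]
      have habs : |t| ≤ 1 := by rw [abs_of_pos ht0]; exact ht1
      have habs' : |(-t)| ≤ 1 := by rwa [abs_neg]
      have h1 : Real.exp t ≤ 1 + t + t ^ 2 := my_exp_le_quad habs
      have h2 : Real.exp (-t) ≤ 1 - t + t ^ 2 := by
        have := my_exp_le_quad habs'
        calc Real.exp (-t) ≤ 1 + (-t) + (-t) ^ 2 := this
        _ = 1 - t + t ^ 2 := by ring
      have hexpo : (Real.exp t - 1) * p + (Real.exp (-t) - 1) * q ≤ -(ε * t) / 2 := by
        have hb1 : (Real.exp t - 1) * p ≤ (t + t ^ 2) * p := by nlinarith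
        have hb2 : (Real.exp (-t) - 1) * q ≤ (-t + t ^ 2) * q := by nlinarith
        have hb3 : (t + t ^ 2) * p + (-t + t ^ 2) * q ≤ -(ε * t) / 2 := by
          have h5 : (t + t ^ 2) * p ≤ (t + t ^ 2) * (q - ε) := by
            apply mul_le_mul_of_nonneg_left (by linarith) (by nlinarith)
          have h6 : q * (t * t) = ε / 6 * t := by
            rw [← hqt]; ring
          nlinarith [mul_nonneg hε0.le ht0.le, mul_nonneg (mul_nonneg hε0.le ht0.le) ht0.le]
        exact le_trans (add_le_add hb1 hb2) hb3
      calc 1 + ((Real.exp t - 1) * p + (Real.exp (-t) - 1) * q)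
          ≤ Real.exp ((Real.exp t - 1) * p + (Real.exp (-t) - 1) * q) := by
            linarith [Real.add_one_le_exp ((Real.exp t - 1) * p + (Real.exp (-t) - 1) * q)]
        _ ≤ Real.exp (-(ε * t) / 2) := Real.exp_le_exp.mpr hexpo
    -- Chernoff
    have hSint : Integrable (fun ω => Real.exp (t * (∑ j, X j) ω)) P :=
      hXindep.integrable_exp_mul_sum hXmeas (fun j _ => hint j)
    have hcher := measure_ge_le_exp_mul_mgf (X := ∑ j, X j) (μ := P) 0 ht0.le hSint
    rw [mul_zero, Real.exp_zero, one_mul] at hcher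
    have hmgfS : mgf (∑ j, X j) P t = ∏ j, mgf (X j) P t := hXindep.mgf_sum hXmeas univ
    have hmgfS_le : mgf (∑ j, X j) P t ≤ Real.exp (-(ε * t) / 2) ^ n := by
      rw [hmgfS]
      calc ∏ j, mgf (X j) P t ≤ ∏ _j : Fin n, Real.exp (-(ε * t) / 2) :=
          Finset.prod_le_prod (fun j _ => mgf_nonneg) (fun j _ => hmgf_le j)
        _ = Real.exp (-(ε * t) / 2) ^ n := by rw [Finset.prod_const, Finset.card_univ,
            Fintype.card_fin]
    have hfinal : Real.exp (-(ε * t) / 2) ^ n ≤ δ / m := by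
      rw [← Real.exp_nat_mul]
      have hlog : Real.log ((m:ℝ) / δ) ≤ (n:ℝ) * (ε * t) / 2 := by
        have heq : Real.log ((m:ℝ) / δ)
            = (12 * q / ε ^ 2 * Real.log ((m:ℝ) / δ)) * (ε ^ 2 / (12 * q)) := by
          field_simp
        have hstep := mul_le_mul_of_nonneg_right hn
          (by positivity : (0:ℝ) ≤ ε ^ 2 / (12 * q))
        have heq2 : (n:ℝ) * (ε ^ 2 / (12 * q)) = (n:ℝ) * (ε * t) / 2 := by
          rw [ht_def]; field_simp; ring
        rw [← heq2]; rw [heq]; exact hstep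
      have : (n:ℝ) * (-(ε * t) / 2) ≤ - Real.log ((m:ℝ) / δ) := by linarith
      calc Real.exp ((n:ℝ) * (-(ε * t) / 2)) ≤ Real.exp (- Real.log ((m:ℝ) / δ)) :=
          Real.exp_le_exp.mpr this
        _ = δ / m := by
          rw [Real.exp_neg, Real.exp_log (by positivity)]
          rw [inv_div]
    -- identify the bad set
    have hset : Bad k = {ω | (0:ℝ) ≤ (∑ j, X j) ω} := by
      ext ω
      simp only [hBad_def, Set.mem_setOf_eq, Finset.sum_apply]
      have hsum : ∑ j, X j ω =
          ((Finset.univ.filter fun j => r j ω = k).card : ℝ) -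
          ((Finset.univ.filter fun j => r j ω = ℓ').card : ℝ) := by
        simp only [hX_def, hg_def, Function.comp_apply]
        rw [Finset.sum_sub_distrib, Finset.sum_boole, Finset.sum_boole]
      rw [hsum, sub_nonneg, Nat.cast_le]
    rw [hset]
    calc (P {ω | (0:ℝ) ≤ (∑ j, X j) ω}).toReal ≤ mgf (∑ j, X j) P t := hcher
      _ ≤ Real.exp (-(ε * t) / 2) ^ n := hmgfS_le
      _ ≤ δ / m := hfinal
  -- union bound
  have hGc : G.compl = ⋃ k ∈ Finset.univ.erase ℓ', Bad k := by
    ext ω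
    simp only [Set.compl, hG_def, Set.mem_setOf_eq, Set.mem_iUnion, hBad_def,
      Finset.mem_erase, Finset.mem_univ, and_true, not_forall, not_lt, exists_prop]
    all_goals tauto
  have hBadle : ∀ k ∈ Finset.univ.erase ℓ', P (Bad k) ≤ ENNReal.ofReal (δ / m) := by
    intro k hk
    have hkne := (Finset.mem_erase.mp hk).1
    exact (ENNReal.le_ofReal_iff_toReal_le (measure_ne_top _ _)
      (by positivity)).mpr (key k hkne)
  have hunion : P Gᶜ ≤ ENNReal.ofReal δ := by
    calc P Gᶜ ≤ ∑ k ∈ Finset.univ.erase ℓ', P (Bad k) := by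
          rw [show Gᶜ = G.compl from rfl, hGc]
          exact measure_biUnion_finset_le _ _
      _ ≤ ∑ _k ∈ Finset.univ.erase ℓ', ENNReal.ofReal (δ / m) :=
          Finset.sum_le_sum hBadle
      _ = ((Finset.univ.erase ℓ').card : ℝ≥0∞) * ENNReal.ofReal (δ / m) := by
          rw [Finset.sum_const, nsmul_eq_mul]
      _ ≤ (m : ℝ≥0∞) * ENNReal.ofReal (δ / m) := by
          gcongr
          exact_mod_cast (Finset.card_erase_le.trans (by simp))
      _ = ENNReal.ofReal ((m:ℝ) * (δ / m)) := by
          rw [ENNReal.ofReal_mul (by positivity)]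
          congr 1
          exact (ENNReal.ofReal_natCast m).symm
      _ = ENNReal.ofReal δ := by
          congr 1
          field_simp
  have hGcR : (P Gᶜ).toReal ≤ δ :=
    ENNReal.toReal_le_of_le_ofReal hδ0.le hunion
  have hsum1 : (P G).toReal + (P Gᶜ).toReal = 1 := by
    have := prob_add_prob_compl (μ := P) hGmeas
    have h := congrArg ENNReal.toReal this
    rw [ENNReal.toReal_add (measure_ne_top _ _) (measure_ne_top _ _)] at h
    simpa using h
  linarith
end

section
/- Under the biased-misbehavior mixture for the average scoring rule, where each rating equals ℓ′ with probability f′ and is categorical with parameters α (mean γ) otherwise, the mean of the mixed distribution equals (1−f′)γ + f′ℓ′, so |mixed mean − γ| = f′·|ℓ′ − γ|. Consequently, if n ≥ (3/ε²)ln(2m/δ), then with probability at least 1−δ, f′|ℓ′ − γ| − ε√(m(γ + f′ℓ′ − γf′)) − mε² ≤ |r̂ − γ| ≤ ε√(m(γ + f′ℓ′ − γf′)) + mε² + f′|ℓ′ − γ|. -/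
open MeasureTheory ProbabilityTheory Finset
open Real


lemma my_mono_aux {f f' : ℝ → ℝ} {v : ℝ} (hv : 0 ≤ v)
    (hder : ∀ u, 0 ≤ u → u ≤ v → HasDerivAt f (f' u) u)
    (hpos : ∀ u, 0 ≤ u → u ≤ v → 0 ≤ f' u) : f 0 ≤ f v := by
  rcases eq_or_lt_of_le hv with h | h
  · rw [← h]
  · have mono := monotoneOn_of_deriv_nonneg (convex_Icc 0 v)
      (fun u hu => (hder u hu.1 hu.2).continuousAt.continuousWithinAt)
      (fun u hu => by
        rw [interior_Icc] at hu
        exact (hder u hu.1.le hu.2.le).differentiableAt.differentiableWithinAt)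
      (fun u hu => by
        rw [interior_Icc] at hu
        rw [(hder u hu.1.le hu.2.le).deriv]
        exact hpos u hu.1.le hu.2.le)
    exact mono ⟨le_refl 0, hv⟩ ⟨hv, le_refl v⟩ hv

lemma my_log_lb {v : ℝ} (hv : 0 ≤ v) : 2 * v / (2 + v) ≤ Real.log (1 + v) := by
  have key : (fun u : ℝ => Real.log (1 + u) - (2 - 4 / (2 + u))) 0 ≤
      (fun u : ℝ => Real.log (1 + u) - (2 - 4 / (2 + u))) v := by
    refine my_mono_aux (f := fun u : ℝ => Real.log (1 + u) - (2 - 4 / (2 + u)))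
      (f' := fun u => 1 / (1 + u) - 4 / (2 + u) ^ 2) hv ?_ ?_
    · intro u hu0 _
      have h1 : (0:ℝ) < 1 + u := by linarith
      have h2 : (0:ℝ) < 2 + u := by linarith
      have hl : HasDerivAt (fun u : ℝ => Real.log (1 + u)) (1 / (1 + u)) u := by
        have := ((hasDerivAt_id u).const_add 1).log h1.ne'
        simpa using this
      have hd : HasDerivAt (fun u : ℝ => 2 - 4 / (2 + u))
          (-((0 * (2 + u) - 4 * 1) / (2 + u) ^ 2)) u := by
        exact ((hasDerivAt_const u (4:ℝ)).div ((hasDerivAt_id u).const_add 2) h2.ne').const_sub 2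
      have := hl.sub hd
      exact this.congr_deriv (by ring)
    · intro u hu0 _
      have h1 : (0:ℝ) < 1 + u := by linarith
      have h2 : (0:ℝ) < (2 + u) ^ 2 := by positivity
      rw [sub_nonneg, div_le_div_iff₀ h2 h1]
      nlinarith [sq_nonneg u]
  simp only at key
  have h2 : (0:ℝ) < 2 + v := by linarith
  have : 2 * v / (2 + v) = 2 - 4 / (2 + v) := by field_simp; ring
  rw [this]
  simp at key
  linarith

lemma my_h_lb {v : ℝ} (hv : 0 ≤ v) :
    3 * v ^ 2 / (6 + 2 * v) ≤ (1 + v) * Real.log (1 + v) - v := by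
  have key : (fun u : ℝ => (1 + u) * Real.log (1 + u) - u - ((3/2) * u - 9/2 + (27/2) / (3 + u))) 0 ≤
      (fun u : ℝ => (1 + u) * Real.log (1 + u) - u - ((3/2) * u - 9/2 + (27/2) / (3 + u))) v := by
    refine my_mono_aux
      (f := fun u : ℝ => (1 + u) * Real.log (1 + u) - u - ((3/2) * u - 9/2 + (27/2) / (3 + u)))
      (f' := fun u => (1 * Real.log (1 + u) + (1 + u) * (1 / (1 + u)) - 1)
        - (3/2 - (27/2) * 1 / (3 + u) ^ 2)) hv ?_ ?_
    · intro u hu0 _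
      have h1 : (0:ℝ) < 1 + u := by linarith
      have h3 : (0:ℝ) < 3 + u := by linarith
      have hl : HasDerivAt (fun u : ℝ => Real.log (1 + u)) (1 / (1 + u)) u := by
        have := ((hasDerivAt_id u).const_add 1).log h1.ne'
        simpa using this
      have hml : HasDerivAt (fun u : ℝ => (1 + u) * Real.log (1 + u))
          (1 * Real.log (1 + u) + (1 + u) * (1 / (1 + u))) u :=
        ((hasDerivAt_id u).const_add 1).mul hl
      have hu : HasDerivAt (fun u : ℝ => u) 1 u := hasDerivAt_id u
      have hq : HasDerivAt (fun u : ℝ => (3/2) * u - 9/2 + (27/2) / (3 + u))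
          ((3/2) - (27/2) * 1 / (3 + u) ^ 2) u := by
        have hdiv : HasDerivAt (fun u : ℝ => (27/2) / (3 + u))
            ((0 * (3 + u) - (27/2) * 1) / (3 + u) ^ 2) u :=
          (hasDerivAt_const u ((27:ℝ)/2)).div ((hasDerivAt_id u).const_add 3) h3.ne'
        have := ((hu.const_mul (3/2:ℝ)).sub_const (9/2)).add hdiv
        exact this.congr_deriv (by ring)
      exact (hml.sub hu).sub hq
    · intro u hu0 _
      have h1 : (0:ℝ) < 1 + u := by linarith
      have h2 : (0:ℝ) < 2 + u := by linarith
      have h3 : (0:ℝ) < 3 + u := by linarith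
      have hlog := my_log_lb hu0
      have hfrac : 3/2 ≤ 2 * u / (2 + u) + (27/2) / (3 + u) ^ 2 := by
        rw [div_add_div _ _ h2.ne' (by positivity : ((3+u)^2 : ℝ) ≠ 0),
          le_div_iff₀ (by positivity)]
        nlinarith [pow_nonneg hu0 3]
      have hiu : (1 + u) * (1 / (1 + u)) = 1 := by field_simp
      have : (27:ℝ)/2 * 1 / (3+u)^2 = (27/2) / (3+u)^2 := by ring
      simp only [hiu, this]
      linarith
  simp only at key
  have h3 : (0:ℝ) < 3 + v := by linarith
  have heq : 3 * v ^ 2 / (6 + 2 * v) = (3/2) * v - 9/2 + (27/2) / (3 + v) := by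
    field_simp
    ring
  rw [heq]
  simp at key
  linarith

lemma my_low_lb {x : ℝ} (hx0 : 0 ≤ x) (hx1 : x < 1) :
    x ^ 2 / 2 ≤ (1 - x) * Real.log (1 - x) + x := by
  have key : (fun u : ℝ => (1 - u) * Real.log (1 - u) + u - u ^ 2 / 2) 0 ≤
      (fun u : ℝ => (1 - u) * Real.log (1 - u) + u - u ^ 2 / 2) x := by
    refine my_mono_aux
      (f := fun u : ℝ => (1 - u) * Real.log (1 - u) + u - u ^ 2 / 2)
      (f' := fun u => ((-1) * Real.log (1 - u) + (1 - u) * (-1 / (1 - u)) + 1) - u) hx0 ?_ ?_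
    · intro u hu0 hux
      have h1 : (0:ℝ) < 1 - u := by linarith
      have hl : HasDerivAt (fun u : ℝ => Real.log (1 - u)) (-1 / (1 - u)) u := by
        have := ((hasDerivAt_id u).const_sub 1).log h1.ne'
        simpa using this
      have hml : HasDerivAt (fun u : ℝ => (1 - u) * Real.log (1 - u))
          ((-1) * Real.log (1 - u) + (1 - u) * (-1 / (1 - u))) u :=
        ((hasDerivAt_id u).const_sub 1).mul hl
      have hsq : HasDerivAt (fun u : ℝ => u ^ 2 / 2) u u := by
        have := (hasDerivAt_pow 2 u).div_const 2
        simpa using this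
      exact (hml.add (hasDerivAt_id u)).sub hsq
    · intro u hu0 hux
      have h1 : (0:ℝ) < 1 - u := by linarith
      have hiu : (1 - u) * (-1 / (1 - u)) = -1 := by field_simp
      simp only [hiu]
      have hlog : Real.log (1 - u) ≤ -u := by
        have := Real.log_le_sub_one_of_pos h1
        linarith
      nlinarith
  simp only at key
  simp at key
  linarith

set_option maxHeartbeats 2000000 in
lemma my_chernoff {Ω : Type*} [MeasurableSpace Ω] (P : Measure Ω) [IsProbabilityMeasure P]
    (n : ℕ) (hn0 : 0 < n) (X : Fin n → Ω → ℝ) (hXmeas : ∀ j, Measurable (X j))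
    (hindep : iIndepFun X P)
    (M μR : ℝ) (hM : 1 ≤ M) (hμ1 : 1 ≤ μR)
    (hX1 : ∀ j ω, 1 ≤ X j ω) (hXM : ∀ j ω, X j ω ≤ M)
    (hmgf : ∀ j s, mgf (X j) P s ≤ Real.exp (μR / M * (Real.exp (s * M) - 1)))
    (ε δ : ℝ) (hε : 0 < ε) (hδ0 : 0 < δ) (hδ1 : δ < 1)
    (hlog : Real.log (2 / δ) ≤ (n : ℝ) * ε ^ 2 / 3)
    (t : ℝ) (ht1 : ε * Real.sqrt (M * μR) ≤ t) (ht2 : M * ε ^ 2 ≤ t) :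
    1 - δ ≤ (P {ω | |(∑ j, X j ω) / (n : ℝ) - μR| ≤ t}).toReal := by
  have hM0 : (0:ℝ) < M := by linarith
  have hμ0 : (0:ℝ) < μR := by linarith
  have ht0 : (0:ℝ) < t := lt_of_lt_of_le (by positivity) ht2
  have hn' : (0:ℝ) < (n:ℝ) := by exact_mod_cast hn0
  have htsq : ε ^ 2 * (M * μR) ≤ t ^ 2 := by
    have h0 : 0 ≤ ε * Real.sqrt (M * μR) := by positivity
    have h1 : (ε * Real.sqrt (M * μR)) ^ 2 = ε ^ 2 * (M * μR) := by
      rw [mul_pow, Real.sq_sqrt (by positivity)]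
    nlinarith
  have hld : Real.log (δ/2) = -Real.log (2/δ) := by
    rw [← Real.log_inv, inv_div]
  -- integrability
  have hXint : ∀ (j : Fin n) (s : ℝ), Integrable (fun ω => Real.exp (s * X j ω)) P := by
    intro j s
    refine Integrable.mono' (integrable_const (Real.exp (|s| * M)))
      (((hXmeas j).const_mul s).exp.aestronglyMeasurable) (ae_of_all _ fun ω => ?_)
    rw [Real.norm_eq_abs, Real.abs_exp]
    apply Real.exp_le_exp.mpr
    have habs : |X j ω| ≤ M := abs_le.mpr ⟨by linarith [hX1 j ω], hXM j ω⟩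
    calc s * X j ω ≤ |s * X j ω| := le_abs_self _
      _ = |s| * |X j ω| := abs_mul _ _
      _ ≤ |s| * M := by gcongr
  have hSint : ∀ s : ℝ, Integrable (fun ω => Real.exp (s * (∑ j, X j) ω)) P := fun s =>
    hindep.integrable_exp_mul_sum hXmeas (fun j _ => hXint j s)
  have hSmgf : ∀ s : ℝ, mgf (∑ j, X j) P s ≤
      Real.exp ((n : ℝ) * (μR / M * (Real.exp (s * M) - 1))) := by
    intro s
    rw [hindep.mgf_sum hXmeas Finset.univ]
    calc ∏ j : Fin n, mgf (X j) P s
        ≤ ∏ _j : Fin n, Real.exp (μR / M * (Real.exp (s * M) - 1)) :=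
          Finset.prod_le_prod (fun j _ => mgf_nonneg) (fun j _ => hmgf j s)
      _ = Real.exp (μR / M * (Real.exp (s * M) - 1)) ^ n := by
          rw [Finset.prod_const, Finset.card_univ, Fintype.card_fin]
      _ = Real.exp ((n : ℝ) * (μR / M * (Real.exp (s * M) - 1))) := by
          rw [← Real.exp_nat_mul]
  -- upper tail
  have hup : (P {ω | (n:ℝ) * (μR + t) ≤ (∑ j, X j) ω}).toReal ≤ δ / 2 := by
    set v : ℝ := t / μR with hvdef
    have hv0 : 0 < v := by positivity
    set sp : ℝ := Real.log (1 + v) / M with hspdef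
    have hsp0 : 0 ≤ sp := div_nonneg (Real.log_nonneg (by linarith)) hM0.le
    have hexp : Real.exp (sp * M) = 1 + v := by
      rw [hspdef, div_mul_cancel₀ _ hM0.ne', Real.exp_log (by linarith)]
    have hμt : μR + t = μR * (1 + v) := by rw [hvdef]; field_simp
    have hB : ε ^ 2 / 3 ≤ sp * (μR + t) - μR / M * ((1 + v) - 1) := by
      have hkey : sp * (μR + t) - μR / M * ((1 + v) - 1)
          = μR / M * ((1 + v) * Real.log (1 + v) - v) := by
        rw [hμt, hspdef]; field_simp; ring
      rw [hkey]
      have h1 := my_h_lb hv0.le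
      have h2 : ε ^ 2 / 3 ≤ μR / M * (3 * v ^ 2 / (6 + 2 * v)) := by
        have heq : μR / M * (3 * v ^ 2 / (6 + 2 * v)) = 3 * t ^ 2 / (M * (6 * μR + 2 * t)) := by
          rw [hvdef]; field_simp
        rw [heq, div_le_div_iff₀ (by norm_num) (by positivity)]
        nlinarith [mul_le_mul_of_nonneg_right ht2 ht0.le]
      have h3 := mul_le_mul_of_nonneg_left h1 (by positivity : (0:ℝ) ≤ μR / M)
      linarith
    refine (measure_ge_le_exp_mul_mgf ((n:ℝ) * (μR + t)) hsp0 (hSint sp)).trans ?_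
    calc Real.exp (-sp * ((n:ℝ) * (μR + t))) * mgf (∑ j, X j) P sp
        ≤ Real.exp (-sp * ((n:ℝ) * (μR + t))) *
            Real.exp ((n : ℝ) * (μR / M * (Real.exp (sp * M) - 1))) := by
          exact mul_le_mul_of_nonneg_left (hSmgf sp) (Real.exp_pos _).le
      _ = Real.exp (-sp * ((n:ℝ) * (μR + t)) + (n : ℝ) * (μR / M * (Real.exp (sp * M) - 1))) :=
          (Real.exp_add _ _).symm
      _ ≤ δ / 2 := by
          rw [← Real.exp_log (show (0:ℝ) < δ/2 by positivity)]
          apply Real.exp_le_exp.mpr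
          rw [hexp, hld]
          have h4 : (n:ℝ) * (ε ^ 2 / 3) ≤
              (n:ℝ) * (sp * (μR + t) - μR / M * ((1 + v) - 1)) :=
            mul_le_mul_of_nonneg_left hB hn'.le
          nlinarith [hlog]
  -- lower tail
  have hlow : (P {ω | (∑ j, X j) ω ≤ (n:ℝ) * (μR - t)}).toReal ≤ δ / 2 := by
    by_cases hcase : μR - t < 1
    · have hempty : {ω | (∑ j, X j) ω ≤ (n:ℝ) * (μR - t)} = ∅ := by
        ext ω
        simp only [Set.mem_setOf_eq, Set.mem_empty_iff_false, iff_false, not_le]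
        have hge : (n:ℝ) ≤ (∑ j, X j) ω := by
          rw [Finset.sum_apply]
          calc (n:ℝ) = ∑ _j : Fin n, (1:ℝ) := by simp
            _ ≤ ∑ j, X j ω := Finset.sum_le_sum (fun j _ => hX1 j ω)
        nlinarith
      rw [hempty]
      simp only [measure_empty, ENNReal.toReal_zero]
      positivity
    · push_neg at hcase
      set x : ℝ := t / μR with hxdef
      have hx0 : 0 < x := by positivity
      have hx1 : x < 1 := by
        rw [hxdef, div_lt_one hμ0]; linarith
      set sm : ℝ := Real.log (1 - x) / M with hsmdef
      have hsm0 : sm ≤ 0 :=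
        div_nonpos_of_nonpos_of_nonneg (Real.log_nonpos (by linarith) (by linarith)) hM0.le
      have hexp : Real.exp (sm * M) = 1 - x := by
        rw [hsmdef, div_mul_cancel₀ _ hM0.ne', Real.exp_log (by linarith)]
      have hμt : μR - t = μR * (1 - x) := by rw [hxdef]; field_simp
      have hB : ε ^ 2 / 3 ≤ sm * (μR - t) - μR / M * ((1 - x) - 1) := by
        have hkey : sm * (μR - t) - μR / M * ((1 - x) - 1)
            = μR / M * ((1 - x) * Real.log (1 - x) + x) := by
          rw [hμt, hsmdef]; field_simp; ring
        rw [hkey]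
        have h2 := my_low_lb hx0.le hx1
        have h3 : ε ^ 2 / 3 ≤ μR / M * (x ^ 2 / 2) := by
          have heq : μR / M * (x ^ 2 / 2) = t ^ 2 / (2 * (M * μR)) := by
            rw [hxdef]; field_simp
          rw [heq, div_le_div_iff₀ (by norm_num) (by positivity)]
          nlinarith
        have h4 := mul_le_mul_of_nonneg_left h2 (by positivity : (0:ℝ) ≤ μR / M)
        linarith
      refine (measure_le_le_exp_mul_mgf ((n:ℝ) * (μR - t)) hsm0 (hSint sm)).trans ?_
      calc Real.exp (-sm * ((n:ℝ) * (μR - t))) * mgf (∑ j, X j) P sm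
          ≤ Real.exp (-sm * ((n:ℝ) * (μR - t))) *
              Real.exp ((n : ℝ) * (μR / M * (Real.exp (sm * M) - 1))) := by
            exact mul_le_mul_of_nonneg_left (hSmgf sm) (Real.exp_pos _).le
        _ = Real.exp (-sm * ((n:ℝ) * (μR - t)) + (n : ℝ) * (μR / M * (Real.exp (sm * M) - 1))) :=
            (Real.exp_add _ _).symm
        _ ≤ δ / 2 := by
            rw [← Real.exp_log (show (0:ℝ) < δ/2 by positivity)]
            apply Real.exp_le_exp.mpr
            rw [hexp, hld]
            have h4 : (n:ℝ) * (ε ^ 2 / 3) ≤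
                (n:ℝ) * (sm * (μR - t) - μR / M * ((1 - x) - 1)) :=
              mul_le_mul_of_nonneg_left hB hn'.le
            nlinarith [hlog]
  -- combine
  set E : Set Ω := {ω | |(∑ j, X j ω) / (n : ℝ) - μR| ≤ t} with hEdef
  have hSmeas : Measurable fun ω => ∑ j, X j ω :=
    Finset.measurable_sum Finset.univ (fun j _ => hXmeas j)
  have hEmeas : MeasurableSet E :=
    measurableSet_le (((hSmeas.div_const _).sub_const _).abs) measurable_const
  have hEc : Eᶜ ⊆ {ω | (n:ℝ) * (μR + t) ≤ (∑ j, X j) ω} ∪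
      {ω | (∑ j, X j) ω ≤ (n:ℝ) * (μR - t)} := by
    intro ω hω
    simp only [hEdef, Set.mem_compl_iff, Set.mem_setOf_eq, not_le] at hω
    have hsa : (∑ j, X j) ω = ∑ j, X j ω := Finset.sum_apply ω Finset.univ X
    rcases lt_abs.mp hω with h | h
    · left
      simp only [Set.mem_setOf_eq, hsa]
      have h2 : (μR + t) * (n:ℝ) < ∑ j, X j ω := by
        have := (lt_div_iff₀ hn').mp (by linarith : μR + t < (∑ j, X j ω) / (n:ℝ))
        linarith
      linarith
    · right
      simp only [Set.mem_setOf_eq, hsa]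
      have h2 : (∑ j, X j ω) < (μR - t) * (n:ℝ) := by
        have := (div_lt_iff₀ hn').mp (by linarith : (∑ j, X j ω) / (n:ℝ) < μR - t)
        linarith
      linarith
  have hcompl : (P E).toReal + (P Eᶜ).toReal = 1 := by
    rw [← ENNReal.toReal_add (measure_ne_top P _) (measure_ne_top P _),
      measure_add_measure_compl hEmeas]
    simp
  have hc2 : (P Eᶜ).toReal ≤ δ := by
    calc (P Eᶜ).toReal
        ≤ (P ({ω | (n:ℝ) * (μR + t) ≤ (∑ j, X j) ω} ∪
            {ω | (∑ j, X j) ω ≤ (n:ℝ) * (μR - t)})).toReal :=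
          ENNReal.toReal_mono (measure_ne_top _ _) (measure_mono hEc)
      _ ≤ ((P {ω | (n:ℝ) * (μR + t) ≤ (∑ j, X j) ω}) +
            (P {ω | (∑ j, X j) ω ≤ (n:ℝ) * (μR - t)})).toReal :=
          ENNReal.toReal_mono
            (ENNReal.add_ne_top.mpr ⟨measure_ne_top _ _, measure_ne_top _ _⟩)
            (measure_union_le _ _)
      _ = (P {ω | (n:ℝ) * (μR + t) ≤ (∑ j, X j) ω}).toReal +
            (P {ω | (∑ j, X j) ω ≤ (n:ℝ) * (μR - t)}).toReal :=
          ENNReal.toReal_add (measure_ne_top _ _) (measure_ne_top _ _)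
      _ ≤ δ / 2 + δ / 2 := add_le_add hup hlow
      _ = δ := by ring
  linarith

set_option maxHeartbeats 1000000 in
/-- Average scoring rule under biased misbehavior: each of `n` i.i.d. ratings on `{1,…,m}`
(encoded as `Fin m`, index `k` standing for value `k+1`) equals `ℓ'` with probability `f'`
and is categorical `α` (mean `γ`) otherwise, so the mixed distribution is
`k ↦ f'·1[k = ℓ'] + (1-f')α_k`. The mixed mean equals `(1-f')γ + f'·ℓ'`, hence
`|mixed mean - γ| = f'|ℓ' - γ|`; and if `n ≥ (3/ε²)ln(2m/δ)` then with probability at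
least `1 - δ`,
`f'|ℓ' - γ| - ε√(m(γ + f'ℓ' - γf')) - mε² ≤ |r̂ - γ| ≤ ε√(m(γ + f'ℓ' - γf')) + mε² + f'|ℓ' - γ|`. -/
theorem average_scoring_biased_misbehavior
    {Ω : Type*} [MeasurableSpace Ω] (P : Measure Ω) [IsProbabilityMeasure P]
    (m n : ℕ) (hm : 0 < m) (hn0 : 0 < n) (α : Fin m → ℝ) (r : Fin n → Ω → Fin m)
    (hmeas : ∀ j, Measurable (r j))
    (hindep : iIndepFun r P)
    (ℓ' : Fin m) (f' : ℝ) (hf0 : 0 ≤ f') (hf1 : f' ≤ 1)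
    (hdist : ∀ j k, P {ω | r j ω = k} =
      ENNReal.ofReal (f' * (if k = ℓ' then 1 else 0) + (1 - f') * α k))
    (hα_nonneg : ∀ k, 0 ≤ α k) (hα_sum : ∑ k, α k = 1)
    (γ ℓ'v : ℝ) (hγ : γ = ∑ k : Fin m, ((k : ℕ) + 1 : ℝ) * α k)
    (hℓ'v : ℓ'v = ((ℓ' : ℕ) + 1 : ℝ))
    (ε δ : ℝ) (hε : 0 < ε) (hδ0 : 0 < δ) (hδ1 : δ < 1)
    (hn : 3 / ε ^ 2 * Real.log (2 * m / δ) ≤ (n : ℝ)) :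
    (∑ k : Fin m, ((k : ℕ) + 1 : ℝ) *
        (f' * (if k = ℓ' then 1 else 0) + (1 - f') * α k) = (1 - f') * γ + f' * ℓ'v) ∧
    |((1 - f') * γ + f' * ℓ'v) - γ| = f' * |ℓ'v - γ| ∧
    1 - δ ≤ (P {ω |
      f' * |ℓ'v - γ| - ε * Real.sqrt (m * (γ + f' * ℓ'v - γ * f')) - m * ε ^ 2 ≤
        |(∑ j, ((r j ω : ℕ) + 1 : ℝ)) / n - γ| ∧
      |(∑ j, ((r j ω : ℕ) + 1 : ℝ)) / n - γ| ≤
        ε * Real.sqrt (m * (γ + f' * ℓ'v - γ * f')) + m * ε ^ 2 +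
          f' * |ℓ'v - γ|}).toReal := by
  set q : Fin m → ℝ := fun k => f' * (if k = ℓ' then 1 else 0) + (1 - f') * α k with hqdef
  have hq0 : ∀ k, 0 ≤ q k := by
    intro k
    apply add_nonneg
    · apply mul_nonneg hf0; split <;> norm_num
    · exact mul_nonneg (by linarith) (hα_nonneg k)
  have hsum_ite : ∑ k : Fin m, (if k = ℓ' then (1:ℝ) else 0) = 1 := by
    rw [Finset.sum_ite_eq' Finset.univ ℓ' (fun _ => (1:ℝ))]
    simp
  have hq1 : ∑ k, q k = 1 := by
    rw [hqdef]
    rw [Finset.sum_add_distrib, ← Finset.mul_sum, ← Finset.mul_sum, hsum_ite, hα_sum]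
    ring
  have part1 : ∑ k : Fin m, ((k : ℕ) + 1 : ℝ) *
      (f' * (if k = ℓ' then 1 else 0) + (1 - f') * α k) = (1 - f') * γ + f' * ℓ'v := by
    have h1 : ∀ k : Fin m, (((k:ℕ):ℝ) + 1) * (f' * (if k = ℓ' then (1:ℝ) else 0) + (1 - f') * α k)
        = (if k = ℓ' then f' * (((k:ℕ):ℝ) + 1) else 0) + (1 - f') * ((((k:ℕ):ℝ) + 1) * α k) := by
      intro k; split <;> ring
    rw [Finset.sum_congr rfl (fun k _ => h1 k), Finset.sum_add_distrib,
      Finset.sum_ite_eq' Finset.univ ℓ' (fun k => f' * (((k:ℕ):ℝ) + 1)), ← Finset.mul_sum,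
      ← hγ, hℓ'v]
    simp only [Finset.mem_univ, if_true]
    ring
  have part2 : |((1 - f') * γ + f' * ℓ'v) - γ| = f' * |ℓ'v - γ| := by
    rw [show ((1 - f') * γ + f' * ℓ'v) - γ = f' * (ℓ'v - γ) by ring, abs_mul, abs_of_nonneg hf0]
  refine ⟨part1, part2, ?_⟩
  set μR : ℝ := γ + f' * ℓ'v - γ * f' with hμRdef
  have hμeq : μR = (1 - f') * γ + f' * ℓ'v := by rw [hμRdef]; ring
  have hmean : ∑ k, q k * (((k:ℕ):ℝ) + 1) = μR := by
    rw [hμeq, ← part1]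
    exact Finset.sum_congr rfl fun k _ => by rw [hqdef]; ring
  have hμ1 : 1 ≤ μR := by
    rw [← hmean, ← hq1]
    refine Finset.sum_le_sum fun k _ => ?_
    have h0 : (0:ℝ) ≤ ((k:ℕ):ℝ) := Nat.cast_nonneg _
    nlinarith [hq0 k]
  have hm1 : (1:ℝ) ≤ (m:ℝ) := by exact_mod_cast hm
  -- the random variables
  set X : Fin n → Ω → ℝ := fun j => (fun k : Fin m => (((k:ℕ):ℝ) + 1)) ∘ r j with hXdef
  have hXmeas : ∀ j, Measurable (X j) := fun j =>
    (measurable_of_finite (fun k : Fin m => (((k:ℕ):ℝ) + 1))).comp (hmeas j)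
  have hXindep : iIndepFun X P :=
    hindep.comp _ (fun _ => measurable_of_finite _)
  have hX1 : ∀ j ω, 1 ≤ X j ω := by
    intro j ω
    simp only [hXdef, Function.comp_apply]
    have : (0:ℝ) ≤ ((r j ω : ℕ) : ℝ) := Nat.cast_nonneg _
    linarith
  have hXM : ∀ j ω, X j ω ≤ (m:ℝ) := by
    intro j ω
    simp only [hXdef, Function.comp_apply]
    have : (r j ω : ℕ) + 1 ≤ m := (r j ω).isLt
    exact_mod_cast this
  -- distribution computation
  have key : ∀ (j : Fin n) (g : Fin m → ℝ), ∫ ω, g (r j ω) ∂P = ∑ k, q k * g k := by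
    intro j g
    have : IsProbabilityMeasure (P.map (r j)) := Measure.isProbabilityMeasure_map (hmeas j).aemeasurable
    rw [← integral_map (hmeas j).aemeasurable (measurable_of_finite g).aestronglyMeasurable,
      integral_fintype .of_finite]
    refine Finset.sum_congr rfl fun k _ => ?_
    rw [Measure.real, Measure.map_apply (hmeas j) (measurableSet_singleton k)]
    have hpre : r j ⁻¹' {k} = {ω | r j ω = k} := rfl
    rw [hpre, hdist j k, smul_eq_mul]
    rw [ENNReal.toReal_ofReal (hq0 k)]
  -- mgf bound
  have hmgf : ∀ (j : Fin n) (s : ℝ), mgf (X j) P s ≤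
      Real.exp (μR / (m:ℝ) * (Real.exp (s * m) - 1)) := by
    intro j s
    have hrepr : mgf (X j) P s = ∑ k, q k * Real.exp (s * (((k:ℕ):ℝ) + 1)) :=
      key j (fun k => Real.exp (s * (((k:ℕ):ℝ) + 1)))
    rw [hrepr]
    have hchord : ∀ k : Fin m, Real.exp (s * (((k:ℕ):ℝ) + 1)) ≤
        (1 - (((k:ℕ):ℝ) + 1) / m) + (((k:ℕ):ℝ) + 1) / m * Real.exp (s * m) := by
      intro k
      set a : ℝ := (((k:ℕ):ℝ) + 1) / m with hadef
      have hm0 : (0:ℝ) < m := by linarith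
      have ha0 : 0 ≤ a := by positivity
      have ha1 : a ≤ 1 := by
        rw [hadef, div_le_one hm0]
        exact_mod_cast Nat.succ_le_of_lt k.isLt
      have hcv := convexOn_exp.2 (Set.mem_univ (0:ℝ)) (Set.mem_univ (s * m))
        (by linarith : (0:ℝ) ≤ 1 - a) ha0 (by ring)
      simp only [smul_eq_mul, mul_zero, Real.exp_zero, mul_one] at hcv
      have harg : (0:ℝ) + a * (s * m) = s * (((k:ℕ):ℝ) + 1) := by
        rw [hadef]; field_simp; ring
      rw [harg] at hcv
      linarith [hcv]
    calc ∑ k, q k * Real.exp (s * (((k:ℕ):ℝ) + 1))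
        ≤ ∑ k, q k * ((1 - (((k:ℕ):ℝ) + 1) / m) + (((k:ℕ):ℝ) + 1) / m * Real.exp (s * m)) :=
          Finset.sum_le_sum fun k _ => mul_le_mul_of_nonneg_left (hchord k) (hq0 k)
      _ = 1 + μR / m * (Real.exp (s * m) - 1) := by
          have hexpand : ∀ k : Fin m,
              q k * ((1 - (((k:ℕ):ℝ) + 1) / m) + (((k:ℕ):ℝ) + 1) / m * Real.exp (s * m))
              = q k + (q k * (((k:ℕ):ℝ) + 1)) * ((Real.exp (s * m) - 1) / m) := by
            intro k; field_simp; ring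
          rw [Finset.sum_congr rfl fun k _ => hexpand k, Finset.sum_add_distrib,
            ← Finset.sum_mul, hmean, hq1]
          field_simp
      _ ≤ Real.exp (μR / m * (Real.exp (s * m) - 1)) := by
          have := Real.add_one_le_exp (μR / m * (Real.exp (s * m) - 1))
          linarith
  -- log hypothesis
  have hε2 : (0:ℝ) < ε ^ 2 := by positivity
  have hlog : Real.log (2 / δ) ≤ (n : ℝ) * ε ^ 2 / 3 := by
    have h1 : Real.log (2 / δ) ≤ Real.log (2 * m / δ) := by
      apply Real.log_le_log (by positivity)
      gcongr
      linarith
    have h2 : Real.log (2 * m / δ) ≤ (n : ℝ) * ε ^ 2 / 3 := by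
      have h := mul_le_mul_of_nonneg_right hn (by positivity : (0:ℝ) ≤ ε ^ 2 / 3)
      calc Real.log (2 * m / δ) = 3 / ε ^ 2 * Real.log (2 * m / δ) * (ε ^ 2 / 3) := by
            field_simp
        _ ≤ (n:ℝ) * (ε ^ 2 / 3) := h
        _ = (n:ℝ) * ε ^ 2 / 3 := by ring
    linarith
  -- apply chernoff
  have hcher := my_chernoff P n hn0 X hXmeas hXindep (m:ℝ) μR hm1 hμ1 hX1 hXM hmgf
    ε δ hε hδ0 hδ1 hlog (ε * Real.sqrt ((m:ℝ) * μR) + m * ε ^ 2)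
    (le_add_of_nonneg_right (by positivity)) (le_add_of_nonneg_left (by positivity))
  refine hcher.trans (ENNReal.toReal_mono (measure_ne_top _ _) (measure_mono ?_))
  intro ω hω
  simp only [Set.mem_setOf_eq] at hω ⊢
  have hsum : (∑ j, X j ω) = ∑ j, (((r j ω : ℕ) : ℝ) + 1) := rfl
  rw [hsum] at hω
  have habs : |μR - γ| = f' * |ℓ'v - γ| := by
    rw [show μR - γ = f' * (ℓ'v - γ) by rw [hμRdef]; ring, abs_mul, abs_of_nonneg hf0]
  set W : ℝ := (∑ j, (((r j ω : ℕ) : ℝ) + 1)) / n with hWdef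
  have tri1 : |W - γ| ≤ |W - μR| + |μR - γ| := abs_sub_le W μR γ
  have tri2 : |μR - γ| ≤ |μR - W| + |W - γ| := abs_sub_le μR W γ
  rw [abs_sub_comm μR W] at tri2
  rw [habs] at tri1 tri2
  constructor
  · linarith [hω]
  · linarith [hω]
end
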